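/- Let k be a field, R a k-algebra, G a group acting on R by k-algebra automorphisms, and suppose R is G-simple (no nonzero proper G-invariant two-sided ideals). Let A₂ be another k-algebra with a group H₂ acting by automorphisms. If u ∈ R ⊗_k A₂ is fixed by the subgroup G × {1}, commutes with all elements of R ⊗ 1, and Z(R)^G = k, then u ∈ 1 ⊗ A₂; i.e., u = 1 ⊗ w for some w ∈ A₂. -/

import Mathlib

open TensorProduct

/-- Let `R` be a `G`-simple `k`-algebra with `Z(R)^G = k`, and let `A₂` be
another `k`-algebra with a group `H₂` acting by automorphisms.  If `u ∈ R ⊗[k] A₂` is fixed by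
`G × {1}` and commutes with `R ⊗ 1`, then `u = 1 ⊗ w` for some `w ∈ A₂`. -/
theorem fixed_centralizing_element_of_tensor
    {k : Type*} [Field k] {R A₂ : Type*} [Ring R] [Ring A₂] [Algebra k R] [Algebra k A₂]
    {G H₂ : Type*} [Group G] [Group H₂]
    (φ : G →* (R ≃ₐ[k] R)) (ψ : H₂ →* (A₂ ≃ₐ[k] A₂))
    (hGsimple : ∀ I : TwoSidedIdeal R, (∀ g : G, ∀ x ∈ I, φ g x ∈ I) → I = ⊥ ∨ I = ⊤)
    (hcenter : ∀ z ∈ Subalgebra.center k R, (∀ g : G, φ g z = z) →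
      ∃ c : k, z = algebraMap k R c)
    (u : R ⊗[k] A₂)
    (hufix : ∀ g : G, (Algebra.TensorProduct.congr (φ g) (AlgEquiv.refl (R := k) (A₁ := A₂))) u = u)
    (hucomm : ∀ r : R, u * (r ⊗ₜ[k] (1 : A₂)) = (r ⊗ₜ[k] (1 : A₂)) * u) :
    ∃ w : A₂, u = (1 : R) ⊗ₜ[k] w := by
  classical
  rcases subsingleton_or_nontrivial R with hR | hR
  · refine ⟨0, ?_⟩
    have : Subsingleton (R ⊗[k] A₂) :=
      subsingleton_of_zero_eq_one (by rw [show (0 : R ⊗[k] A₂) = (0 : R) ⊗ₜ[k] (1 : A₂) by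
        rw [TensorProduct.zero_tmul], Algebra.TensorProduct.one_def, Subsingleton.elim (0:R) 1])
    exact Subsingleton.elim _ _
  set b := Module.Basis.ofVectorSpace k A₂ with hb
  set e : R ⊗[k] A₂ ≃ₗ[k] (Module.Basis.ofVectorSpaceIndex k A₂ →₀ R) :=
    TensorProduct.equivFinsuppOfBasisRight b with he
  -- right multiplication by `r ⊗ 1` acts componentwise
  have hR : ∀ (x : R ⊗[k] A₂) (r : R) (i), e (x * (r ⊗ₜ[k] (1 : A₂))) i = e x i * r := by
    intro x r i
    induction x using TensorProduct.induction_on with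
    | zero => simp
    | tmul v a =>
        rw [Algebra.TensorProduct.tmul_mul_tmul, mul_one]
        simp only [he, TensorProduct.equivFinsuppOfBasisRight_apply_tmul_apply]
        rw [smul_mul_assoc]
    | add x y hx hy =>
        rw [add_mul, map_add, map_add, Finsupp.add_apply, Finsupp.add_apply, hx, hy, add_mul]
  -- left multiplication by `r ⊗ 1` acts componentwise
  have hL : ∀ (x : R ⊗[k] A₂) (r : R) (i), e ((r ⊗ₜ[k] (1 : A₂)) * x) i = r * e x i := by
    intro x r i
    induction x using TensorProduct.induction_on with
    | zero => simp
    | tmul v a =>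
        rw [Algebra.TensorProduct.tmul_mul_tmul, one_mul]
        simp only [he, TensorProduct.equivFinsuppOfBasisRight_apply_tmul_apply]
        rw [mul_smul_comm]
    | add x y hx hy =>
        rw [mul_add, map_add, map_add, Finsupp.add_apply, Finsupp.add_apply, hx, hy, mul_add]
  -- the `G`-action acts componentwise
  have hGact : ∀ (x : R ⊗[k] A₂) (g : G) (i),
      e ((Algebra.TensorProduct.congr (φ g) (AlgEquiv.refl (R := k) (A₁ := A₂))) x) i
        = φ g (e x i) := by
    intro x g i
    induction x using TensorProduct.induction_on with
    | zero => simp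
    | tmul v a =>
        rw [Algebra.TensorProduct.congr_apply, Algebra.TensorProduct.map_tmul]
        simp only [he, AlgHom.coe_coe, AlgEquiv.coe_refl, id_eq,
          TensorProduct.equivFinsuppOfBasisRight_apply_tmul_apply]
        rw [map_smul]
        rfl
    | add x y hx hy =>
        rw [map_add, map_add, map_add, Finsupp.add_apply, Finsupp.add_apply, hx, hy, map_add]
  -- each component of `u` is a `G`-fixed central element, hence a scalar
  have hscalar : ∀ i, ∃ c : k, e u i = algebraMap k R c := by
    intro i
    refine hcenter (e u i) ?_ ?_
    · rw [Subalgebra.mem_center_iff]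
      intro r
      have := hucomm r
      have h1 := hR u r i
      have h2 := hL u r i
      rw [this, h2] at h1
      exact h1
    · intro g
      have := hGact u g i
      rw [hufix g] at this
      exact this.symm
  choose c hc using hscalar
  -- package the scalars into a finitely supported function
  have hcsupp : ∀ i, c i ≠ 0 → i ∈ (e u).support := by
    intro i hi
    rw [Finsupp.mem_support_iff, hc i]
    intro h
    exact hi ((map_eq_zero_iff _ (algebraMap k R).injective).mp h)
  set cf : Module.Basis.ofVectorSpaceIndex k A₂ →₀ k := Finsupp.onFinset (e u).support c hcsupp with hcf
  refine ⟨b.repr.symm cf, ?_⟩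
  apply e.injective
  ext i
  rw [hc i]
  have : e ((1 : R) ⊗ₜ[k] (b.repr.symm cf)) i = b.repr (b.repr.symm cf) i • (1 : R) := by
    simp only [he, TensorProduct.equivFinsuppOfBasisRight_apply_tmul_apply]
  rw [this, b.repr.apply_symm_apply]
  simp only [hcf, Finsupp.onFinset_apply]
  rw [Algebra.algebraMap_eq_smul_one]
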